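/- For every complex number s with Re(s) > −1: Σ_{d=1}^{∞} Q(d)·d^{−s} = (ζ(s+2)/ζ(2s+4)) · ∏_{p prime} (1 + (2p² + p − 1)/((p⁴ − 2p² − p + 1)(1 + p^{2+s}))), where the Dirichlet series on the left converges absolutely and the Euler product on the right converges. -/

import Mathlib

/-- `Q(d) = μ(d)² ∏_{p ∣ d} p² / (p⁴ - 2p² - p + 1)`. -/
noncomputable def Qfun (d : ℕ) : ℝ :=
  ((ArithmeticFunction.moebius d : ℤ) : ℝ) ^ 2 *
    ∏ p ∈ d.primeFactors, (p : ℝ) ^ 2 / ((p : ℝ) ^ 4 - 2 * (p : ℝ) ^ 2 - (p : ℝ) + 1)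

/-- The Euler factor at `p` of the product representing `Σ Q(d) d^{-s}`. -/
noncomputable def eulerFac (s : ℂ) (p : Nat.Primes) : ℂ :=
  1 + (2 * ((p : ℕ) : ℂ) ^ 2 + ((p : ℕ) : ℂ) - 1) /
    ((((p : ℕ) : ℂ) ^ 4 - 2 * ((p : ℕ) : ℂ) ^ 2 - ((p : ℕ) : ℂ) + 1) *
      (1 + ((p : ℕ) : ℂ) ^ ((2 : ℂ) + s)))

lemma Qfun_zero : Qfun 0 = 0 := by simp [Qfun]

lemma Qfun_one : Qfun 1 = 1 := by simp [Qfun]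

lemma denom_ge {p : ℕ} (hp : 2 ≤ p) : (p:ℝ)^4 / 4 ≤ (p:ℝ)^4 - 2*(p:ℝ)^2 - (p:ℝ) + 1 := by
  have hx : (2:ℝ) ≤ p := by exact_mod_cast hp
  have h1 : (4:ℝ) ≤ (p:ℝ)^2 := by nlinarith
  have h2 : (p:ℝ)^2 * 4 ≤ (p:ℝ)^2 * (p:ℝ)^2 := by nlinarith
  nlinarith

lemma denom_pos {p : ℕ} (hp : 2 ≤ p) : 0 < (p:ℝ)^4 - 2*(p:ℝ)^2 - (p:ℝ) + 1 := by
  have hx : (2:ℝ) ≤ p := by exact_mod_cast hp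
  have := denom_ge hp
  nlinarith

lemma Qfun_nonneg (d : ℕ) : 0 ≤ Qfun d := by
  apply mul_nonneg (sq_nonneg _)
  apply Finset.prod_nonneg
  intro p hp
  have hp2 : 2 ≤ p := (Nat.prime_of_mem_primeFactors hp).two_le
  exact div_nonneg (sq_nonneg _) (denom_pos hp2).le

lemma Qfun_eq_zero_of_not_squarefree {d : ℕ} (h : ¬ Squarefree d) : Qfun d = 0 := by
  simp [Qfun, ArithmeticFunction.moebius_eq_zero_of_not_squarefree h]

lemma Qfun_of_squarefree {d : ℕ} (h : Squarefree d) :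
    Qfun d = ∏ p ∈ d.primeFactors, (p : ℝ) ^ 2 / ((p : ℝ) ^ 4 - 2 * (p : ℝ) ^ 2 - (p : ℝ) + 1) := by
  have : (ArithmeticFunction.moebius d : ℤ) ^ 2 = 1 :=
    ArithmeticFunction.moebius_sq_eq_one_of_squarefree h
  rw [Qfun]
  rw_mod_cast [this]
  norm_num

lemma Qfun_mul {m n : ℕ} (h : Nat.Coprime m n) : Qfun (m*n) = Qfun m * Qfun n := by
  rcases eq_or_ne m 0 with rfl | hm
  · simp [Qfun_zero]
  rcases eq_or_ne n 0 with rfl | hn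
  · simp [Qfun_zero]
  unfold Qfun
  rw [ArithmeticFunction.isMultiplicative_moebius.map_mul_of_coprime h,
    Nat.primeFactors_mul hm hn, Finset.prod_union (Nat.Coprime.disjoint_primeFactors h)]
  push_cast
  ring

lemma natCast_mul_cpow (m n : ℕ) (w : ℂ) :
    ((m * n : ℕ) : ℂ) ^ w = ((m : ℕ) : ℂ) ^ w * ((n : ℕ) : ℂ) ^ w := by
  have h := Complex.mul_cpow_ofReal_nonneg (Nat.cast_nonneg (α := ℝ) m)
    (Nat.cast_nonneg (α := ℝ) n) w
  push_cast at h ⊢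
  exact h

lemma one_le_rpow_nat {p : ℕ} (hp : 1 ≤ p) {e : ℝ} (he : 0 ≤ e) : (1:ℝ) ≤ (p:ℝ) ^ e := by
  calc (1:ℝ) = (1:ℝ) ^ e := (Real.one_rpow e).symm
    _ ≤ (p:ℝ) ^ e := Real.rpow_le_rpow (by norm_num) (by exact_mod_cast hp) he

noncomputable def Ffun (s : ℂ) (d : ℕ) : ℂ := ((Qfun d : ℝ) : ℂ) * (d : ℂ) ^ (-s)

lemma Ffun_zero (s : ℂ) : Ffun s 0 = 0 := by simp [Ffun, Qfun_zero]

lemma Ffun_one (s : ℂ) : Ffun s 1 = 1 := by simp [Ffun, Qfun_one]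

lemma Ffun_mul (s : ℂ) {m n : ℕ} (h : Nat.Coprime m n) :
    Ffun s (m * n) = Ffun s m * Ffun s n := by
  unfold Ffun
  rw [Qfun_mul h, natCast_mul_cpow]
  push_cast
  ring

lemma norm_Ffun {s : ℂ} {d : ℕ} (hd : 0 < d) :
    ‖Ffun s d‖ = Qfun d * (d:ℝ) ^ (-s.re) := by
  rw [Ffun, norm_mul, Complex.norm_real, Real.norm_of_nonneg (Qfun_nonneg d),
    Complex.norm_natCast_cpow_of_pos hd, Complex.neg_re]

lemma Qfun_bound {σ : ℝ} (hσ : -1 < σ) :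
    ∃ C : ℝ, 0 < C ∧ ∀ d : ℕ, 0 < d → Squarefree d →
      Qfun d ≤ C * (d:ℝ) ^ ((1+σ)/2 - 2) := by
  set ε : ℝ := (1+σ)/2 with hε
  have hεpos : 0 < ε := by rw [hε]; linarith
  set M : ℕ := ⌈(4:ℝ) ^ (1/ε)⌉₊ + 1 with hM
  refine ⟨(4:ℝ) ^ M, by positivity, fun d hd hsf => ?_⟩
  have hkey : ∀ p : ℕ, M ≤ p → (4:ℝ) ≤ (p:ℝ) ^ ε := by
    intro p hp
    have h1 : (4:ℝ) ^ (1/ε) ≤ (p:ℝ) := by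
      have h0 : ((4:ℝ) ^ (1/ε)) ≤ (⌈(4:ℝ) ^ (1/ε)⌉₊ : ℝ) := Nat.le_ceil _
      have h2 : ((⌈(4:ℝ) ^ (1/ε)⌉₊ : ℕ) : ℝ) ≤ (p:ℝ) := by
        exact_mod_cast le_trans (Nat.le_succ _) hp
      linarith
    calc (4:ℝ) = ((4:ℝ) ^ (1/ε)) ^ ε := by
          rw [← Real.rpow_mul (by norm_num : (0:ℝ) ≤ 4), one_div_mul_cancel hεpos.ne',
            Real.rpow_one]
      _ ≤ (p:ℝ) ^ ε := Real.rpow_le_rpow (by positivity) h1 hεpos.le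
  set S := d.primeFactors with hS
  have hprod : (∏ p ∈ S, (p:ℕ) : ℕ) = d := Nat.prod_primeFactors_of_squarefree hsf
  have hprodR : (∏ p ∈ S, (p:ℝ)) = (d:ℝ) := by
    rw [← hprod]; push_cast; rfl
  have hdpos : (0:ℝ) < (d:ℝ) := by exact_mod_cast hd
  have step1 : Qfun d ≤ ∏ p ∈ S, (4:ℝ) / (p:ℝ)^2 := by
    rw [Qfun_of_squarefree hsf]
    apply Finset.prod_le_prod
    · intro p hp
      have hp2 : 2 ≤ p := (Nat.prime_of_mem_primeFactors hp).two_le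
      exact div_nonneg (sq_nonneg _) (denom_pos hp2).le
    · intro p hp
      have hp2 : 2 ≤ p := (Nat.prime_of_mem_primeFactors hp).two_le
      have hppos : (0:ℝ) < (p:ℝ)^2 := by
        have : (2:ℝ) ≤ p := by exact_mod_cast hp2
        positivity
      rw [div_le_div_iff₀ (denom_pos hp2) hppos]
      nlinarith [denom_ge hp2]
  have step2 : (∏ _p ∈ S, (4:ℝ)) ≤ (4:ℝ)^M * (d:ℝ) ^ ε := by
    rw [← Finset.prod_filter_mul_prod_filter_not S (fun p => p < M) (fun _ => (4:ℝ))]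
    have hb1 : (∏ _p ∈ S.filter (fun p => p < M), (4:ℝ)) ≤ (4:ℝ)^M := by
      rw [Finset.prod_const]
      apply pow_le_pow_right₀ (by norm_num)
      calc (S.filter (fun p => p < M)).card ≤ (Finset.range M).card := by
            apply Finset.card_le_card
            intro p hp
            simp only [Finset.mem_filter] at hp
            exact Finset.mem_range.mpr hp.2
        _ = M := Finset.card_range M
    have hb2 : (∏ _p ∈ S.filter (fun p => ¬ p < M), (4:ℝ)) ≤ (d:ℝ) ^ ε := by
      have hsplit : (∏ p ∈ S, (p:ℝ) ^ ε) =
          (∏ p ∈ S.filter (fun p => p < M), (p:ℝ) ^ ε) *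
            ∏ p ∈ S.filter (fun p => ¬ p < M), (p:ℝ) ^ ε :=
        (Finset.prod_filter_mul_prod_filter_not S _ _).symm
      have hone : (1:ℝ) ≤ ∏ p ∈ S.filter (fun p => p < M), (p:ℝ) ^ ε := by
        have h := Finset.prod_le_prod (s := S.filter (fun p : ℕ => p < M))
          (f := fun _ : ℕ => (1:ℝ)) (g := fun p : ℕ => (p:ℝ) ^ ε)
          (fun _ _ => zero_le_one)
          (fun p hp => one_le_rpow_nat
            (Nat.prime_of_mem_primeFactors (Finset.mem_of_mem_filter p hp)).one_lt.le hεpos.le)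
        simpa using h
      calc (∏ _p ∈ S.filter (fun p => ¬ p < M), (4:ℝ))
          ≤ ∏ p ∈ S.filter (fun p => ¬ p < M), (p:ℝ) ^ ε := by
            apply Finset.prod_le_prod (fun _ _ => by norm_num)
            intro p hp
            simp only [Finset.mem_filter, not_lt] at hp
            exact hkey p hp.2
        _ ≤ ∏ p ∈ S, (p:ℝ) ^ ε := by
            rw [hsplit]
            apply le_mul_of_one_le_left _ hone
            apply Finset.prod_nonneg
            intro p _
            positivity
        _ = (d:ℝ) ^ ε := by
            rw [← hprodR]
            exact Real.finset_prod_rpow S _ (fun p _ => Nat.cast_nonneg p) ε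
    exact mul_le_mul hb1 hb2 (Finset.prod_nonneg fun _ _ => by norm_num) (by positivity)
  have hd2 : (∏ p ∈ S, (4:ℝ)/(p:ℝ)^2) = (∏ _p ∈ S, (4:ℝ)) / (d:ℝ)^2 := by
    rw [Finset.prod_div_distrib, ← hprodR, ← Finset.prod_pow]
  calc Qfun d ≤ (∏ _p ∈ S, (4:ℝ)) / (d:ℝ)^2 := by rw [← hd2]; exact step1
    _ ≤ (4:ℝ)^M * (d:ℝ)^ε / (d:ℝ)^2 := by gcongr
    _ = (4:ℝ)^M * (d:ℝ) ^ (ε - 2) := by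
        have h2 : (d:ℝ)^(2:ℕ) = (d:ℝ)^((2:ℕ):ℝ) := (Real.rpow_natCast _ 2).symm
        rw [h2, mul_div_assoc, ← Real.rpow_sub hdpos]
        norm_num

lemma summable_normF {s : ℂ} (hs : -1 < s.re) : Summable (fun d : ℕ => ‖Ffun s d‖) := by
  obtain ⟨C, hC, hbound⟩ := Qfun_bound hs
  set r : ℝ := (1 + s.re)/2 - 2 - s.re with hr
  have hrlt : r < -1 := by rw [hr]; linarith
  have hsummable : Summable (fun d : ℕ => C * (d:ℝ) ^ r) :=
    (Real.summable_nat_rpow.mpr hrlt).mul_left C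
  apply Summable.of_nonneg_of_le (fun d => norm_nonneg _) _ hsummable
  intro d
  rcases Nat.eq_zero_or_pos d with rfl | hd
  · rw [Ffun_zero]
    simp only [norm_zero]
    positivity
  by_cases hsf : Squarefree d
  · rw [norm_Ffun hd]
    have h1 := hbound d hd hsf
    have hdpos : (0:ℝ) < (d:ℝ) := by exact_mod_cast hd
    calc Qfun d * (d:ℝ) ^ (-s.re) ≤ C * (d:ℝ) ^ ((1+s.re)/2 - 2) * (d:ℝ) ^ (-s.re) := by
          apply mul_le_mul_of_nonneg_right h1 (by positivity)
      _ = C * (d:ℝ) ^ r := by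
          rw [mul_assoc, ← Real.rpow_add hdpos, hr]
          ring_nf
  · rw [norm_Ffun hd, Qfun_eq_zero_of_not_squarefree hsf, zero_mul]
    positivity

lemma tsum_Ffun_pow (s : ℂ) (p : Nat.Primes) :
    ∑' e : ℕ, Ffun s ((p:ℕ) ^ e) = 1 + Ffun s (p:ℕ) := by
  have hp : (p:ℕ).Prime := p.2
  have h0 : ∀ e ∉ ({0, 1} : Finset ℕ), Ffun s ((p:ℕ) ^ e) = 0 := by
    intro e he
    simp only [Finset.mem_insert, Finset.mem_singleton] at he
    push_neg at he
    have h2 : 2 ≤ e := by omega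
    have hnsf : ¬ Squarefree ((p:ℕ) ^ e) := by
      intro hsf
      have hdvd : (p:ℕ) * (p:ℕ) ∣ (p:ℕ) ^ e := by
        rw [← sq]
        exact pow_dvd_pow _ h2
      exact hp.not_isUnit (hsf _ hdvd)
    simp [Ffun, Qfun_eq_zero_of_not_squarefree hnsf]
  rw [tsum_eq_sum h0]
  rw [Finset.sum_pair (by norm_num : (0:ℕ) ≠ 1)]
  rw [pow_zero, pow_one, Ffun_one]

lemma Ffun_prime (s : ℂ) (p : Nat.Primes) :
    Ffun s (p:ℕ) = (((p:ℕ):ℂ)^2 / (((p:ℕ):ℂ)^4 - 2*((p:ℕ):ℂ)^2 - ((p:ℕ):ℂ) + 1)) *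
      ((p:ℕ):ℂ) ^ (-s) := by
  have hp : (p:ℕ).Prime := p.2
  have hQ : Qfun (p:ℕ) = (((p:ℕ):ℝ)^2 / (((p:ℕ):ℝ)^4 - 2*((p:ℕ):ℝ)^2 - ((p:ℕ):ℝ) + 1)) := by
    rw [Qfun, ArithmeticFunction.moebius_apply_prime hp, hp.primeFactors,
      Finset.prod_singleton]
    norm_num
  rw [Ffun, hQ]
  push_cast
  ring

lemma key_identity {s : ℂ} (hs : -1 < s.re) (p : Nat.Primes) :
    (1 - ((p:ℕ):ℂ) ^ (-(2*s+4)))⁻¹ * (1 + Ffun s (p:ℕ)) =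
      (1 - ((p:ℕ):ℂ) ^ (-(s+2)))⁻¹ * eulerFac s p := by
  have hp : (p:ℕ).Prime := p.2
  have hppos : 0 < (p:ℕ) := hp.pos
  set q : ℂ := ((p:ℕ):ℂ) with hqdef
  have hq0 : q ≠ 0 := by
    rw [hqdef]
    exact_mod_cast Nat.cast_ne_zero.mpr hppos.ne'
  set y : ℂ := q ^ (-(s+2)) with hydef
  have hy0 : y ≠ 0 := by
    rw [hydef, Complex.cpow_def_of_ne_zero hq0]
    exact Complex.exp_ne_zero _
  have hynorm : ‖y‖ = (↑(p:ℕ):ℝ) ^ (-(s.re+2)) := by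
    rw [hydef, Complex.norm_natCast_cpow_of_pos hppos]
    norm_num
  have hylt : ‖y‖ < 1 := by
    rw [hynorm]
    apply Real.rpow_lt_one_of_one_lt_of_neg
    · exact_mod_cast hp.one_lt
    · linarith
  have h1my : (1:ℂ) - y ≠ 0 := by
    intro h
    have : (1:ℂ) = y := sub_eq_zero.mp h
    rw [← this] at hylt
    simp at hylt
  have h1py : (1:ℂ) + y ≠ 0 := by
    intro h
    have : y = -1 := by linear_combination h
    rw [this] at hylt
    simp at hylt
  have h1yy : (1:ℂ) - y*y ≠ 0 := by
    rw [show (1:ℂ) - y*y = (1-y)*(1+y) by ring]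
    exact mul_ne_zero h1my h1py
  have hD : q^4 - 2*q^2 - q + 1 ≠ 0 := by
    have hpos := denom_pos hp.two_le
    rw [hqdef]
    intro h
    have : ((((p:ℕ):ℝ)^4 - 2*((p:ℕ):ℝ)^2 - ((p:ℕ):ℝ) + 1 : ℝ) : ℂ) = 0 := by
      push_cast
      convert h using 1
    rw [Complex.ofReal_eq_zero] at this
    linarith
  have e1 : q ^ (-(2*s+4)) = y * y := by
    rw [show -(2*s+4) = -(s+2) + -(s+2) by ring, Complex.cpow_add _ _ hq0, hydef]
  have e2 : q ^ (-s) = y * q^2 := by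
    rw [show -s = -(s+2) + 2 by ring, Complex.cpow_add _ _ hq0, hydef]
    congr 1
    rw [show (2:ℂ) = ((2:ℕ):ℂ) by norm_num, Complex.cpow_natCast]
  have e3 : q ^ ((2:ℂ) + s) = y⁻¹ := by
    rw [show (2:ℂ) + s = -(-(s+2)) by ring, Complex.cpow_neg, hydef]
  rw [Ffun_prime, eulerFac]
  rw [← hqdef, e1, e2, e3]
  have h1pyinv : 1 + y⁻¹ ≠ 0 := by
    rw [show (1:ℂ) + y⁻¹ = (y + 1) * y⁻¹ by field_simp]
    exact mul_ne_zero (by rwa [add_comm] at h1py) (inv_ne_zero hy0)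
  have e5 : (q^4 - 2*q^2 - q + 1) * (1 + y⁻¹) = ((q^4 - 2*q^2 - q + 1) * (1+y)) / y := by
    field_simp
    ring
  rw [e5, div_div_eq_mul_div]
  have hDy : (q^4 - 2*q^2 - q + 1) * (1+y) ≠ 0 := mul_ne_zero hD h1py
  field_simp [h1yy, h1my, hD]
  have hD' : q * (q * (q ^ 2 - 2) - 1) + 1 ≠ 0 := by convert hD using 1; ring
  have hy2 : (1:ℂ) - y ^ 2 ≠ 0 := by convert h1yy using 1; ring
  field_simp
  ring

noncomputable def aterm (s : ℂ) (p : Nat.Primes) : ℂ :=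
  (2 * ((p : ℕ) : ℂ) ^ 2 + ((p : ℕ) : ℂ) - 1) /
    ((((p : ℕ) : ℂ) ^ 4 - 2 * ((p : ℕ) : ℂ) ^ 2 - ((p : ℕ) : ℂ) + 1) *
      (1 + ((p : ℕ) : ℂ) ^ ((2 : ℂ) + s)))

lemma eulerFac_eq (s : ℂ) (p : Nat.Primes) : eulerFac s p = 1 + aterm s p := rfl

lemma norm_aterm_le {s : ℂ} (hs : -1 < s.re) (p : Nat.Primes) :
    ‖aterm s p‖ ≤ 24 / ((p:ℕ):ℝ)^3 := by
  have hp : (p:ℕ).Prime := p.2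
  have hx : (2:ℝ) ≤ ((p:ℕ):ℝ) := by exact_mod_cast hp.two_le
  set x : ℝ := ((p:ℕ):ℝ) with hxdef
  have hxpos : 0 < x := by linarith
  -- numerator
  have hnum : ‖2 * ((p:ℕ):ℂ)^2 + ((p:ℕ):ℂ) - 1‖ ≤ 3 * x^2 := by
    have : (2 * ((p:ℕ):ℂ)^2 + ((p:ℕ):ℂ) - 1) = (((2*x^2 + x - 1 : ℝ)) : ℂ) := by
      push_cast [hxdef]; ring
    rw [this, Complex.norm_real, Real.norm_of_nonneg (by nlinarith)]
    nlinarith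
  -- denominator factor 1
  have hD : ‖(((p:ℕ):ℂ)^4 - 2*((p:ℕ):ℂ)^2 - ((p:ℕ):ℂ) + 1)‖ ≥ x^4/4 := by
    have : (((p:ℕ):ℂ)^4 - 2*((p:ℕ):ℂ)^2 - ((p:ℕ):ℂ) + 1) = ((x^4 - 2*x^2 - x + 1 : ℝ) : ℂ) := by
      push_cast [hxdef]; ring
    rw [this, Complex.norm_real, Real.norm_of_nonneg (denom_pos hp.two_le).le]
    exact denom_ge hp.two_le
  -- denominator factor 2
  have hx2 : ‖(1 + ((p:ℕ):ℂ) ^ ((2:ℂ)+s))‖ ≥ x/2 := by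
    have h1 : ‖((p:ℕ):ℂ) ^ ((2:ℂ)+s)‖ = x ^ ((2:ℝ) + s.re) := by
      rw [Complex.norm_natCast_cpow_of_pos hp.pos]
      norm_num
      rfl
    have h2 : x ^ ((1:ℝ)) ≤ x ^ ((2:ℝ) + s.re) :=
      Real.rpow_le_rpow_of_exponent_le (by linarith) (by linarith)
    rw [Real.rpow_one] at h2
    have h3 : ‖((p:ℕ):ℂ) ^ ((2:ℂ)+s)‖ - 1 ≤ ‖(1 + ((p:ℕ):ℂ) ^ ((2:ℂ)+s))‖ := by
      calc ‖((p:ℕ):ℂ) ^ ((2:ℂ)+s)‖ - 1 = ‖((p:ℕ):ℂ) ^ ((2:ℂ)+s)‖ - ‖(-1 : ℂ)‖ := by norm_num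
        _ ≤ ‖((p:ℕ):ℂ) ^ ((2:ℂ)+s) - (-1)‖ := norm_sub_norm_le _ _
        _ = ‖(1 + ((p:ℕ):ℂ) ^ ((2:ℂ)+s))‖ := by rw [sub_neg_eq_add, add_comm]
    rw [h1] at h3
    linarith
  rw [aterm, norm_div, norm_mul]
  calc ‖2 * ((p:ℕ):ℂ)^2 + ((p:ℕ):ℂ) - 1‖ /
        (‖(((p:ℕ):ℂ)^4 - 2*((p:ℕ):ℂ)^2 - ((p:ℕ):ℂ) + 1)‖ * ‖(1 + ((p:ℕ):ℂ) ^ ((2:ℂ)+s))‖)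
      ≤ (3 * x^2) / (x^4/4 * (x/2)) := by
        apply div_le_div₀ (by positivity) hnum (by positivity)
        exact mul_le_mul hD hx2 (by positivity) (norm_nonneg _)
    _ = 24 / x^3 := by
        field_simp
        ring

lemma multipliable_eulerFac {s : ℂ} (hs : -1 < s.re) : Multipliable (eulerFac s) := by
  by_cases hzero : ∃ p, eulerFac s p = 0
  · obtain ⟨p₀, hp₀⟩ := hzero
    refine ⟨0, ?_⟩
    rw [HasProd]
    apply Filter.Tendsto.congr' _ tendsto_const_nhds
    filter_upwards [Filter.eventually_ge_atTop ({p₀} : Finset Nat.Primes)] with t ht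
    exact (Finset.prod_eq_zero (ht (Finset.mem_singleton_self p₀)) hp₀).symm
  · push_neg at hzero
    have hlog : Summable fun p : Nat.Primes => Complex.log (eulerFac s p) := by
      have hsum1 : Summable (fun n : ℕ => (3/2) * (24 / (n:ℝ)^3)) := by
        apply Summable.mul_left
        have h := (Real.summable_one_div_nat_pow (p := 3)).mpr (by norm_num)
        have h2 := h.mul_left (24:ℝ)
        apply h2.congr
        intro n
        rw [← mul_div_assoc, mul_one]
      have hsummable : Summable (fun p : Nat.Primes => (3/2) * (24 / ((p:ℕ):ℝ)^3)) :=
        hsum1.comp_injective Subtype.val_injective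
      apply Summable.of_norm_bounded_eventually hsummable
      rw [Filter.eventually_cofinite]
      apply Set.Finite.subset
        (Set.Finite.preimage Subtype.val_injective.injOn (Set.finite_Iio (4:ℕ)))
      intro p hp
      simp only [Set.mem_setOf_eq, not_le] at hp
      simp only [Set.mem_preimage, Set.mem_Iio]
      by_contra h4
      push_neg at h4
      have hx4 : (4:ℝ) ≤ ((p:ℕ):ℝ) := by exact_mod_cast h4
      have hb := norm_aterm_le hs p
      have hxpos : (0:ℝ) < ((p:ℕ):ℝ) := by linarith
      have hsmall : ‖aterm s p‖ ≤ 1/2 := by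
        have : 24 / ((p:ℕ):ℝ)^3 ≤ 24 / 64 := by
          apply div_le_div_of_nonneg_left (by norm_num) (by norm_num)
          calc (64:ℝ) = 4^3 := by norm_num
            _ ≤ ((p:ℕ):ℝ)^3 := pow_le_pow_left₀ (by norm_num) hx4 3
        linarith
      have hlogle : ‖Complex.log (eulerFac s p)‖ ≤ 3/2 * ‖aterm s p‖ := by
        show ‖Complex.log (1 + aterm s p)‖ ≤ 3/2 * ‖aterm s p‖
        exact Complex.norm_log_one_add_half_le_self hsmall
      have : ‖Complex.log (eulerFac s p)‖ ≤ 3/2 * (24 / ((p:ℕ):ℝ)^3) := by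
        calc ‖Complex.log (eulerFac s p)‖ ≤ 3/2 * ‖aterm s p‖ := hlogle
          _ ≤ 3/2 * (24 / ((p:ℕ):ℝ)^3) := by linarith
      exact absurd this (not_le.mpr hp)
    exact Complex.multipliable_of_summable_log hlog

theorem stmt16' (s : ℂ) (hs : -1 < s.re) :
    Summable (Ffun s) ∧
    Multipliable (eulerFac s) ∧
    (∑' d : ℕ, Ffun s d) =
      riemannZeta (s + 2) / riemannZeta (2 * s + 4) * ∏' p : Nat.Primes, eulerFac s p := by
  have hsum := summable_normF hs
  have hG : HasProd (fun p : Nat.Primes => 1 + Ffun s (p:ℕ)) (∑' d, Ffun s d) := by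
    have h := EulerProduct.eulerProduct_hasProd (f := Ffun s) (Ffun_one s)
      (fun {m n} h => Ffun_mul s h) hsum (Ffun_zero s)
    exact (funext (tsum_Ffun_pow s) : (fun p : Nat.Primes => ∑' e, Ffun s ((p:ℕ)^e)) = _) ▸ h
  have hre1 : 1 < (s+2).re := by
    simp only [Complex.add_re, Complex.re_ofNat]
    linarith
  have hre2 : 1 < (2*s+4).re := by
    simp only [Complex.add_re, Complex.mul_re, Complex.re_ofNat, Complex.im_ofNat]
    linarith
  have hA := riemannZeta_eulerProduct_hasProd hre1
  have hB := riemannZeta_eulerProduct_hasProd hre2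
  have hE : Multipliable (eulerFac s) := multipliable_eulerFac hs
  refine ⟨hsum.of_norm, hE, ?_⟩
  have h1 : HasProd (fun p : Nat.Primes => (1 - ((p:ℕ):ℂ)^(-(2*s+4)))⁻¹ * (1 + Ffun s (p:ℕ)))
      (riemannZeta (2*s+4) * ∑' d, Ffun s d) := hB.mul hG
  have h2 : HasProd (fun p : Nat.Primes => (1 - ((p:ℕ):ℂ)^(-(s+2)))⁻¹ * eulerFac s p)
      (riemannZeta (s+2) * ∏' p, eulerFac s p) := hA.mul hE.hasProd
  have hfe : (fun p : Nat.Primes => (1 - ((p:ℕ):ℂ)^(-(2*s+4)))⁻¹ * (1 + Ffun s (p:ℕ))) =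
      (fun p : Nat.Primes => (1 - ((p:ℕ):ℂ)^(-(s+2)))⁻¹ * eulerFac s p) :=
    funext (fun p => key_identity hs p)
  rw [hfe] at h1
  have heq := h1.unique h2
  have hz : riemannZeta (2*s+4) ≠ 0 := riemannZeta_ne_zero_of_one_lt_re hre2
  rw [div_mul_eq_mul_div, eq_div_iff hz]
  linear_combination heq


theorem stmt16 (s : ℂ) (hs : -1 < s.re) :
    Summable (fun d : ℕ => ((Qfun d : ℝ) : ℂ) * (d : ℂ) ^ (-s)) ∧
    Multipliable (eulerFac s) ∧
    (∑' d : ℕ, ((Qfun d : ℝ) : ℂ) * (d : ℂ) ^ (-s)) =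
      riemannZeta (s + 2) / riemannZeta (2 * s + 4) * ∏' p : Nat.Primes, eulerFac s p :=
  stmt16' s hs
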